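/- arXiv:math/9907119 — 2 statements merged into one kernel-verified Lean document; each statement's English description precedes it below -/
import Mathlib

section
/- If gcd(m,n) = 1, then the Cartesian product K_m □ K_n is isomorphic to the circulant graph on Z/mnZ where i ~ j iff i ≠ j and (m | i-j or n | i-j). -/
open SimpleGraph

/-- A graph is circulant iff its automorphism group contains a transitive cyclic subgroup,
i.e. some automorphism whose iterates act transitively on the vertices. -/
def SimpleGraph.IsCirculant {V : Type*} (G : SimpleGraph V) : Prop :=
  ∃ φ : G ≃g G, ∀ v w : V, ∃ k : ℕ, (φ.toEquiv ^ k) v = w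

/-- The tensor (categorical/Kronecker) product of simple graphs. -/
def SimpleGraph.tensor {α β : Type*} (G : SimpleGraph α) (H : SimpleGraph β) :
    SimpleGraph (α × β) where
  Adj x y := G.Adj x.1 y.1 ∧ H.Adj x.2 y.2
  symm := ⟨fun _ _ h => ⟨G.adj_symm h.1, H.adj_symm h.2⟩⟩
  loopless := ⟨fun x h => G.irrefl h.1⟩

/-- `Fin m` is equivalent to `ZMod m` for `m ≠ 0`. -/
def finZModEquiv (m : ℕ) [NeZero m] : Fin m ≃ ZMod m where
  toFun a := (a.val : ZMod m)
  invFun z := ⟨z.val, ZMod.val_lt z⟩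
  left_inv a := by
    ext
    simp [ZMod.val_natCast_of_lt a.isLt]
  right_inv z := by simp [ZMod.natCast_zmod_val]

set_option maxHeartbeats 1000000 in
theorem stmt_13 (m n : ℕ) (hm : 1 ≤ m) (hn : 1 ≤ n) (hcop : Nat.Coprime m n) :
    Nonempty
      (SimpleGraph.boxProd (completeGraph (Fin m)) (completeGraph (Fin n)) ≃g
        SimpleGraph.circulantGraph
          {z : ZMod (m * n) | (m : ℕ) ∣ z.val ∨ (n : ℕ) ∣ z.val}) := by
  haveI : NeZero m := ⟨Nat.one_le_iff_ne_zero.mp hm⟩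
  haveI : NeZero n := ⟨Nat.one_le_iff_ne_zero.mp hn⟩
  haveI : NeZero (m * n) := ⟨Nat.mul_ne_zero (NeZero.ne m) (NeZero.ne n)⟩
  set cr := ZMod.chineseRemainder hcop with hcr
  have hdvd : Nat.lcm m n ∣ m * n := by simp [Nat.lcm_dvd_iff]
  have hcr1 : ∀ z : ZMod (m * n), (cr z).1 = ZMod.castHom (dvd_mul_right m n) (ZMod m) z := by
    intro z
    show (ZMod.castHom hdvd (ZMod m × ZMod n) z).1 = _
    simp [ZMod.castHom_apply, Prod.fst_zmod_cast]
  have hcr2 : ∀ z : ZMod (m * n), (cr z).2 = ZMod.castHom (dvd_mul_left n m) (ZMod n) z := by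
    intro z
    show (ZMod.castHom hdvd (ZMod m × ZMod n) z).2 = _
    simp [ZMod.castHom_apply, Prod.snd_zmod_cast]
  -- membership in the jump set via casts
  have hmem : ∀ z : ZMod (m * n),
      z ∈ {z : ZMod (m * n) | (m : ℕ) ∣ z.val ∨ (n : ℕ) ∣ z.val} ↔
        (ZMod.castHom (dvd_mul_right m n) (ZMod m) z = 0 ∨
         ZMod.castHom (dvd_mul_left n m) (ZMod n) z = 0) := by
    intro z
    have h1 : (m : ℕ) ∣ z.val ↔ ZMod.castHom (dvd_mul_right m n) (ZMod m) z = 0 := by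
      rw [← ZMod.natCast_eq_zero_iff, ZMod.castHom_apply, ZMod.natCast_val]
    have h2 : (n : ℕ) ∣ z.val ↔ ZMod.castHom (dvd_mul_left n m) (ZMod n) z = 0 := by
      rw [← ZMod.natCast_eq_zero_iff, ZMod.castHom_apply, ZMod.natCast_val]
    simp [Set.mem_setOf_eq, h1, h2]
  let e : Fin m × Fin n ≃ ZMod (m * n) :=
    ((finZModEquiv m).prodCongr (finZModEquiv n)).trans cr.toEquiv.symm
  have hfst : ∀ p : Fin m × Fin n,
      ZMod.castHom (dvd_mul_right m n) (ZMod m) (e p) = finZModEquiv m p.1 := by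
    intro p
    rw [← hcr1]
    show (cr (cr.symm _)).1 = _
    rw [RingEquiv.apply_symm_apply cr]
    rfl
  have hsnd : ∀ p : Fin m × Fin n,
      ZMod.castHom (dvd_mul_left n m) (ZMod n) (e p) = finZModEquiv n p.2 := by
    intro p
    rw [← hcr2]
    show (cr (cr.symm _)).2 = _
    rw [RingEquiv.apply_symm_apply cr]
    rfl
  refine ⟨⟨e, ?_⟩⟩
  rintro ⟨a, b⟩ ⟨c, d⟩
  rw [SimpleGraph.circulantGraph, SimpleGraph.fromRel_adj]
  have hsub : ∀ z w : ZMod (m * n),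
      (z - w ∈ {z : ZMod (m * n) | (m : ℕ) ∣ z.val ∨ (n : ℕ) ∣ z.val}) ↔
        (ZMod.castHom (dvd_mul_right m n) (ZMod m) z =
            ZMod.castHom (dvd_mul_right m n) (ZMod m) w ∨
         ZMod.castHom (dvd_mul_left n m) (ZMod n) z =
            ZMod.castHom (dvd_mul_left n m) (ZMod n) w) := by
    intro z w
    rw [hmem, map_sub, map_sub, sub_eq_zero, sub_eq_zero]
  have hAdjIff :
      (circulantGraph {z : ZMod (m * n) | (m : ℕ) ∣ z.val ∨ (n : ℕ) ∣ z.val}).Adj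
        (e (a, b)) (e (c, d)) ↔
        e (a, b) ≠ e (c, d) ∧ (a = c ∨ b = d) := by
    rw [SimpleGraph.circulantGraph, SimpleGraph.fromRel_adj]
    constructor
    · rintro ⟨hne, h | h⟩ <;> refine ⟨hne, ?_⟩ <;> rw [hsub] at h <;>
        rcases h with h | h <;> simp only [hfst, hsnd] at h
      · exact Or.inl ((finZModEquiv m).injective h)
      · exact Or.inr ((finZModEquiv n).injective h)
      · exact Or.inl (((finZModEquiv m).injective h).symm)
      · exact Or.inr (((finZModEquiv n).injective h).symm)
    · rintro ⟨hne, h⟩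
      refine ⟨hne, Or.inl ?_⟩
      rw [hsub]
      rcases h with h | h
      · exact Or.inl (by rw [hfst, hfst, h])
      · exact Or.inr (by rw [hsnd, hsnd, h])
  rw [SimpleGraph.circulantGraph, SimpleGraph.fromRel_adj] at hAdjIff
  rw [hAdjIff]
  have hne : e (a, b) ≠ e (c, d) ↔ (a, b) ≠ (c, d) := by
    constructor
    · intro h h'; exact h (by rw [h'])
    · intro h h'; exact h (e.injective h')
  rw [hne]
  simp only [SimpleGraph.boxProd_adj, completeGraph_eq_top, top_adj, ne_eq, Prod.mk.injEq]
  tauto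
end

section
/- If G is a connected bipartite circulant graph, then K_{n,n} ⊗ G is circulant. -/
open SimpleGraph

lemma aux_isCirculant_of_shift {W : Type*} (T : SimpleGraph W) (N : ℕ) (hN : 0 < N)
    (f : ℤ → W) (hsur : ∀ w, ∃ t, f t = w)
    (hinj : ∀ x y : ℤ, f x = f y → (N:ℤ) ∣ x - y)
    (hper : ∀ t : ℤ, f (t + N) = f t)
    (hadj : ∀ x y : ℤ, T.Adj (f x) (f y) ↔ T.Adj (f (x+1)) (f (y+1))) :
    T.IsCirculant := by
  classical
  have hper' : ∀ (t k : ℤ), (N:ℤ) ∣ k → f (t + k) = f t := by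
    intro t k hk
    obtain ⟨j, rfl⟩ := hk
    induction j using Int.induction_on with
    | zero => simp
    | succ j ih =>
        have h : t + (N:ℤ) * ((j:ℤ) + 1) = (t + (N:ℤ)*j) + N := by ring
        rw [h, hper, ih]
    | pred j ih =>
        have h : t + (N:ℤ) * (-(j:ℤ)) = (t + (N:ℤ) * (-(j:ℤ) - 1)) + N := by ring
        rw [h, hper] at ih
        exact ih
  have hcong : ∀ x y : ℤ, f x = f y → ∀ d : ℤ, f (x + d) = f (y + d) := by
    intro x y h d
    have h1 := hinj x y h
    have h2 : f (y + d + (x - y)) = f (y + d) := hper' _ _ h1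
    rw [show y + d + (x - y) = x + d by ring] at h2
    exact h2
  have htw : ∀ w : W, f (Classical.choose (hsur w)) = w := fun w => Classical.choose_spec (hsur w)
  set tw : W → ℤ := fun w => Classical.choose (hsur w) with htwdef
  have hstep : ∀ t : ℤ, f (tw (f t) + 1) = f (t + 1) := by
    intro t; exact hcong _ _ (htw (f t)) 1
  have hbij : Function.Bijective (fun w => f (tw w + 1)) := by
    constructor
    · intro a b hab
      have h2 : f (tw a + 1 + (-1)) = f (tw b + 1 + (-1)) := hcong _ _ hab (-1)
      simp only [add_neg_cancel_right] at h2
      rw [htw, htw] at h2; exact h2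
    · intro w
      refine ⟨f (tw w - 1), ?_⟩
      have h := hstep (tw w - 1)
      show f (tw (f (tw w - 1)) + 1) = w
      rw [h, sub_add_cancel]; exact htw w
  set E : W ≃ W := Equiv.ofBijective _ hbij with hEdef
  have hE : ∀ t : ℤ, E (f t) = f (t + 1) := fun t => hstep t
  have hadj2 : ∀ a b : W, T.Adj (E a) (E b) ↔ T.Adj a b := by
    intro a b
    conv_rhs => rw [← htw a, ← htw b]
    have h1 : E a = f (tw a + 1) := rfl
    have h2 : E b = f (tw b + 1) := rfl
    rw [h1, h2]
    exact (hadj (tw a) (tw b)).symm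
  have hpow : ∀ (k : ℕ) (t : ℤ), (E ^ k) (f t) = f (t + k) := by
    intro k
    induction k with
    | zero => intro t; simp
    | succ k ih =>
        intro t
        rw [pow_succ, Equiv.Perm.mul_apply, hE, ih]
        congr 1
        push_cast; ring
  refine ⟨⟨E, fun {a b} => hadj2 a b⟩, ?_⟩
  intro v w
  refine ⟨((tw w - tw v) % (N:ℤ)).toNat, ?_⟩
  show (E ^ _) v = w
  have hnn : 0 ≤ (tw w - tw v) % (N:ℤ) := Int.emod_nonneg _ (by exact_mod_cast hN.ne')
  have hcast : (((((tw w - tw v) % (N:ℤ))).toNat : ℤ)) = (tw w - tw v) % (N:ℤ) :=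
    Int.toNat_of_nonneg hnn
  calc (E ^ (((tw w - tw v) % (N:ℤ)).toNat)) v
      = (E ^ (((tw w - tw v) % (N:ℤ)).toNat)) (f (tw v)) := by rw [htw]
    _ = f (tw v + (((tw w - tw v) % (N:ℤ)).toNat : ℤ)) := hpow _ _
    _ = w := by
        rw [hcast]
        have hdvd : (N:ℤ) ∣ (tw v + (tw w - tw v) % (N:ℤ)) - tw w := by
          have h := Int.mul_ediv_add_emod (tw w - tw v) (N:ℤ)
          refine ⟨-((tw w - tw v) / (N:ℤ)), ?_⟩
          linarith
        have h3 := hper' (tw w) _ hdvd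
        rw [show tw w + ((tw v + (tw w - tw v) % (N:ℤ)) - tw w) = tw v + (tw w - tw v) % (N:ℤ) by ring] at h3
        rw [h3, htw]

theorem stmt_15 {V : Type*} [Fintype V] (n : ℕ) (G : SimpleGraph V)
    (hconn : G.Connected) (hbip : G.Colorable 2) (hG : G.IsCirculant) :
    ((completeBipartiteGraph (Fin n) (Fin n)).tensor G).IsCirculant := by
  classical
  obtain ⟨v0⟩ := hconn.nonempty
  rcases Nat.eq_zero_or_pos n with hn | hn
  · subst hn
    refine ⟨RelIso.refl ((completeBipartiteGraph (Fin 0) (Fin 0)).tensor G).Adj, fun v w => ?_⟩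
    rcases v with ⟨(i|i), _⟩ <;> exact i.elim0
  obtain ⟨φ, hφ⟩ := hG
  set π : Equiv.Perm V := φ.toEquiv with hπdef
  have hts : ∀ v : V, ∃ k : ℤ, (π ^ k) v0 = v := by
    intro v; obtain ⟨k, hk⟩ := hφ v0 v; exact ⟨(k:ℤ), by rw [zpow_natCast]; exact hk⟩
  have hadj1 : ∀ a b : V, G.Adj (π a) (π b) ↔ G.Adj a b := fun a b => φ.map_adj_iff
  have hπ : ∀ (k : ℤ) (a b : V), G.Adj ((π ^ k) a) ((π ^ k) b) ↔ G.Adj a b := by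
    intro k
    induction k using Int.induction_on with
    | zero => simp
    | succ k ih =>
        intro a b
        rw [zpow_add_one, Equiv.Perm.mul_apply, Equiv.Perm.mul_apply, ih (π a) (π b), hadj1]
    | pred k ih =>
        intro a b
        rw [zpow_sub_one, Equiv.Perm.mul_apply, Equiv.Perm.mul_apply, ih (π⁻¹ a) (π⁻¹ b)]
        have h := hadj1 (π⁻¹ a) (π⁻¹ b)
        rw [← Equiv.Perm.mul_apply, ← Equiv.Perm.mul_apply, mul_inv_cancel, Equiv.Perm.one_apply,
          Equiv.Perm.one_apply] at h
        exact h.symm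
  set o : ℕ := orderOf π with hodef
  have ho_pos : 0 < o := orderOf_pos π
  have hoz : π ^ (o:ℤ) = 1 := by rw [zpow_natCast]; exact pow_orderOf_eq_one π
  have hfix : ∀ c : ℤ, (π ^ c) v0 = v0 → (o:ℤ) ∣ c := by
    intro c hc
    rw [orderOf_dvd_iff_zpow_eq_one]
    ext v
    obtain ⟨k, hk⟩ := hts v
    have hcomm : π ^ c * π ^ k = π ^ k * π ^ c := by
      rw [← zpow_add, ← zpow_add, add_comm]
    calc (π ^ c) v = (π ^ c) ((π ^ k) v0) := by rw [hk]
      _ = (π ^ c * π ^ k) v0 := rfl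
      _ = (π ^ k * π ^ c) v0 := by rw [hcomm]
      _ = (π ^ k) ((π ^ c) v0) := rfl
      _ = v := by rw [hc, hk]
  have hfix2 : ∀ a b : ℤ, (o:ℤ) ∣ a - b → (π ^ a) v0 = (π ^ b) v0 := by
    rintro a b ⟨j, hj⟩
    have ha : a = b + (o:ℤ) * j := by linarith
    rw [ha, zpow_add, Equiv.Perm.mul_apply, zpow_mul, hoz, one_zpow, Equiv.Perm.one_apply]
  by_cases hE : ∃ u v : V, G.Adj u v
  · -- main case : G has an edge
    -- coloring
    obtain ⟨c0⟩ := hbip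
    set c : V → ZMod 2 := fun v => if c0 v = 0 then 0 else 1 with hcdef
    have hc : ∀ {u v : V}, G.Adj u v → c u ≠ c v := by
      intro u v huv
      have h1 : c0 u ≠ c0 v := c0.valid huv
      have h2 : ∀ a : Fin 2, a = 0 ∨ a = 1 := by decide
      rcases h2 (c0 u) with h | h <;> rcases h2 (c0 v) with h' | h' <;>
        simp only [hcdef, h, h'] <;> first
        | (exact absurd (h.trans h'.symm) h1)
        | decide
    have hconst : ∀ (d : ℤ) (u v : V), c ((π ^ d) u) + c u = c ((π ^ d) v) + c v := by
      intro d u v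
      obtain ⟨p⟩ := hconn u v
      induction p with
      | nil => rfl
      | @cons u u' v h p ih =>
          have h2 : G.Adj ((π ^ d) u) ((π ^ d) u') := (hπ d u u').mpr h
          have e1 := hc h
          have e2 := hc h2
          have key : ∀ a b a2 b2 : ZMod 2, a ≠ a2 → b ≠ b2 → b + a = b2 + a2 := by decide
          rw [key (c u) (c ((π ^ d) u)) (c u') (c ((π ^ d) u')) e1 e2, ih]
    have hadd : ∀ a b c2 d2 : ZMod 2, a + b = c2 + d2 → a + d2 = (c2 + d2) + (b + d2) := by decide
    have hχadd : ∀ d e : ℤ, c ((π ^ (d + e)) v0) + c v0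
        = (c ((π ^ d) v0) + c v0) + (c ((π ^ e) v0) + c v0) := by
      intro d e
      have h1 : c ((π ^ d) ((π ^ e) v0)) + c ((π ^ e) v0) = c ((π ^ d) v0) + c v0 :=
        hconst d ((π ^ e) v0) v0
      have h2 : (π ^ d) ((π ^ e) v0) = (π ^ (d + e)) v0 := by
        rw [zpow_add]; rfl
      rw [h2] at h1
      exact hadd _ _ _ _ h1
    have KL : ∀ d : ℤ, G.Adj v0 ((π ^ d) v0) → Odd d := by
      intro d hd
      rcases Int.even_or_odd d with he | ho
      · exfalso
        obtain ⟨e, rfl⟩ := he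
        have hne1 : ∀ a b : ZMod 2, a ≠ b → b + a = 1 := by decide
        have h1 : c ((π ^ (e + e)) v0) + c v0 = 1 := hne1 _ _ (hc hd)
        have h2 := hχadd e e
        rw [h1] at h2
        have hself : ∀ a : ZMod 2, (1:ZMod 2) = a + a → False := by decide
        exact hself _ h2
      · exact ho
    -- o is even
    obtain ⟨u, v, huv⟩ := hE
    obtain ⟨a, ha⟩ := hts u
    obtain ⟨b, hb⟩ := hts v
    have h1 : G.Adj v0 ((π ^ (b - a)) v0) := by
      have h := (hπ (-a) u v).mpr huv
      rw [← ha, ← hb] at h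
      have e1 : (π ^ (-a)) ((π ^ a) v0) = v0 := by
        rw [show (π ^ (-a)) ((π ^ a) v0) = (π ^ (-a) * π ^ a) v0 from rfl, ← zpow_add]
        simp
      have e2 : (π ^ (-a)) ((π ^ b) v0) = (π ^ (b - a)) v0 := by
        rw [show (π ^ (-a)) ((π ^ b) v0) = (π ^ (-a) * π ^ b) v0 from rfl, ← zpow_add,
          show -a + b = b - a from by ring]
      rw [e1, e2] at h; exact h
    have h2 : G.Adj v0 ((π ^ (b - a + o)) v0) := by
      have e3 : (π ^ (b - a + (o:ℤ))) v0 = (π ^ (b - a)) v0 := hfix2 _ _ ⟨1, by ring⟩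
      rw [e3]; exact h1
    have o1 := KL _ h1
    have o2 := KL _ h2
    have heo : (2:ℤ) ∣ (o:ℤ) := by
      rw [Int.odd_iff] at o1 o2
      omega
    -- the construction
    set M : ℤ := (n : ℤ) * (o : ℤ) with hMdef
    have hM0 : 0 < M := by
      have h1 : (0:ℤ) < n := by exact_mod_cast hn
      have h2 : (0:ℤ) < o := by exact_mod_cast ho_pos
      positivity
    have hMeven : (2:ℤ) ∣ M := Dvd.dvd.mul_left heo n
    have hoM : (o:ℤ) ∣ M := ⟨n, by rw [hMdef]; ring⟩
    have hilt : ∀ s : ℤ, 0 ≤ (s % M) / (o:ℤ) ∧ (s % M) / (o:ℤ) < (n:ℤ) := by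
      intro s
      have hh1 : 0 ≤ s % M := Int.emod_nonneg s (by omega)
      have hh2 : s % M < M := Int.emod_lt_of_pos s hM0
      constructor
      · exact Int.ediv_nonneg hh1 (by positivity)
      · rw [Int.ediv_lt_iff_lt_mul (by exact_mod_cast ho_pos)]
        rw [hMdef] at hh2; exact hh2
    have hiltn : ∀ s : ℤ, ((s % M) / (o:ℤ)).toNat < n := by
      intro s; have hh := hilt s; omega
    set f : ℤ → (Fin n ⊕ Fin n) × V := fun t =>
      (if Even (t - t / 2) then Sum.inl ⟨(((t/2) % M) / (o:ℤ)).toNat, hiltn _⟩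
       else Sum.inr ⟨(((t/2) % M) / (o:ℤ)).toNat, hiltn _⟩,
       (π ^ (t / 2)) v0) with hfdef
    have hGone : ∀ x y : ℤ, G.Adj ((π ^ (x/2)) v0) ((π ^ (y/2)) v0) ↔
        G.Adj v0 ((π ^ (y/2 - x/2)) v0) := by
      intro x y
      have h := hπ (x/2) v0 ((π ^ (y/2 - x/2)) v0)
      have e : (π ^ (x/2)) ((π ^ (y/2 - x/2)) v0) = (π ^ (y/2)) v0 := by
        rw [show (π ^ (x/2)) ((π ^ (y/2 - x/2)) v0) = (π ^ (x/2) * π ^ (y/2 - x/2)) v0 from rfl,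
          ← zpow_add]
        congr 2; ring_nf
      rw [e] at h
      exact h
    have hADJ : ∀ x y : ℤ, ((completeBipartiteGraph (Fin n) (Fin n)).tensor G).Adj (f x) (f y) ↔
        (G.Adj v0 ((π ^ (y/2 - x/2)) v0) ∧ Even (y - x)) := by
      intro x y
      have hdefn : ((completeBipartiteGraph (Fin n) (Fin n)).tensor G).Adj (f x) (f y) ↔
          ((completeBipartiteGraph (Fin n) (Fin n)).Adj (f x).1 (f y).1 ∧
            G.Adj (f x).2 (f y).2) := Iff.rfl
      have hsndx : (f x).2 = (π ^ (x/2)) v0 := by rw [hfdef]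
      have hsndy : (f y).2 = (π ^ (y/2)) v0 := by rw [hfdef]
      have hpart : (completeBipartiteGraph (Fin n) (Fin n)).Adj (f x).1 (f y).1 ↔
          ¬ (Even (x - x/2) ↔ Even (y - y/2)) := by
        by_cases hx : Even (x - x/2) <;> by_cases hy : Even (y - y/2) <;>
          simp [hfdef, hx, hy, completeBipartiteGraph]
      rw [hdefn, hpart, hsndx, hsndy, hGone x y]
      constructor
      · rintro ⟨hp, hg⟩
        have hodd := KL _ hg
        refine ⟨hg, ?_⟩
        rw [Int.even_iff, Int.even_iff] at hp
        rw [Int.odd_iff] at hodd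
        rw [Int.even_iff]
        omega
      · rintro ⟨hA, heven⟩
        have hodd := KL _ hA
        refine ⟨?_, hA⟩
        rw [Int.even_iff, Int.even_iff]
        rw [Int.odd_iff] at hodd
        rw [Int.even_iff] at heven
        omega
    have hNM : ((2*n*o : ℕ):ℤ) = 2*M := by rw [hMdef]; push_cast; ring
    apply aux_isCirculant_of_shift _ (2*n*o)
      (Nat.mul_pos (Nat.mul_pos (by norm_num) hn) ho_pos) f
    · -- surjective
      rintro ⟨p, v⟩
      obtain ⟨k, hk⟩ := hφ v0 v
      have hk' : (π ^ ((k:ℕ):ℤ)) v0 = v := by rw [zpow_natCast]; exact hk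
      set r : ℤ := (k:ℤ) % (o:ℤ) with hrdef
      have hr0 : 0 ≤ r := Int.emod_nonneg _ (by omega)
      have hro : r < (o:ℤ) := Int.emod_lt_of_pos _ (by exact_mod_cast ho_pos)
      have hrv : (π ^ r) v0 = v := by
        rw [← hk']
        apply hfix2
        have hh := Int.mul_ediv_add_emod (k:ℤ) (o:ℤ)
        exact ⟨-((k:ℤ)/(o:ℤ)), by linarith⟩
      have hkey : ∀ i : Fin n, (0 ≤ (i:ℤ)*(o:ℤ) + r ∧ (i:ℤ)*(o:ℤ) + r < M) ∧
          ((i:ℤ)*(o:ℤ) + r) % M = (i:ℤ)*(o:ℤ) + r ∧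
          ((i:ℤ)*(o:ℤ) + r) / (o:ℤ) = (i:ℤ) ∧
          (π ^ ((i:ℤ)*(o:ℤ) + r)) v0 = v := by
        intro i
        have hio : (0:ℤ) ≤ (i:ℤ) := by positivity
        have hin : (i:ℤ) + 1 ≤ (n:ℤ) := by have := i.isLt; omega
        have hoz' : (0:ℤ) < (o:ℤ) := by exact_mod_cast ho_pos
        have hb : 0 ≤ (i:ℤ)*(o:ℤ) + r ∧ (i:ℤ)*(o:ℤ) + r < M := by
          constructor
          · positivity
          · calc (i:ℤ)*(o:ℤ) + r < (i:ℤ)*(o:ℤ) + (o:ℤ) := by linarith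
              _ = ((i:ℤ)+1)*(o:ℤ) := by ring
              _ ≤ (n:ℤ)*(o:ℤ) := by
                  exact mul_le_mul_of_nonneg_right hin (le_of_lt hoz')
              _ = M := hMdef.symm
        refine ⟨hb, Int.emod_eq_of_lt hb.1 hb.2, ?_, ?_⟩
        · rw [add_comm]
          rw [Int.add_mul_ediv_right _ _ (by omega : (o:ℤ) ≠ 0)]
          rw [Int.ediv_eq_zero_of_lt hr0 hro]
          ring
        · rw [← hrv]
          apply hfix2
          exact ⟨(i:ℤ), by ring⟩
      rcases p with i | i
      · obtain ⟨hb, hmod, hdiv, hsv⟩ := hkey i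
        set s : ℤ := (i:ℤ)*(o:ℤ) + r with hsdef
        rcases Int.even_or_odd s with hs | hs
        · refine ⟨2*s, ?_⟩
          have ht2 : (2*s)/2 = s := by omega
          have hc : Even (2*s - s) := by
            rw [show 2*s - s = s from by ring]; exact hs
          simp only [hfdef, ht2, hmod, hdiv, hsv]
          rw [if_pos hc]
          refine congrArg₂ Prod.mk ?_ rfl
          refine congrArg Sum.inl (Fin.ext ?_)
          show ((i:ℤ)).toNat = (i:ℕ)
          omega
        · refine ⟨2*s + 1, ?_⟩
          have ht2 : (2*s+1)/2 = s := by omega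
          have hc : Even (2*s + 1 - s) := by
            rw [show 2*s + 1 - s = s + 1 from by ring]
            rw [Int.even_add_one]
            exact Int.not_even_iff_odd.mpr hs
          simp only [hfdef, ht2, hmod, hdiv, hsv]
          rw [if_pos hc]
          refine congrArg₂ Prod.mk ?_ rfl
          refine congrArg Sum.inl (Fin.ext ?_)
          show ((i:ℤ)).toNat = (i:ℕ)
          omega
      · obtain ⟨hb, hmod, hdiv, hsv⟩ := hkey i
        set s : ℤ := (i:ℤ)*(o:ℤ) + r with hsdef
        rcases Int.even_or_odd s with hs | hs
        · refine ⟨2*s + 1, ?_⟩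
          have ht2 : (2*s+1)/2 = s := by omega
          have hc : ¬ Even (2*s + 1 - s) := by
            rw [show 2*s + 1 - s = s + 1 from by ring]
            rw [Int.even_add_one]
            simpa using hs
          simp only [hfdef, ht2, hmod, hdiv, hsv]
          rw [if_neg hc]
          refine congrArg₂ Prod.mk ?_ rfl
          refine congrArg Sum.inr (Fin.ext ?_)
          show ((i:ℤ)).toNat = (i:ℕ)
          omega
        · refine ⟨2*s, ?_⟩
          have ht2 : (2*s)/2 = s := by omega
          have hc : ¬ Even (2*s - s) := by
            rw [show 2*s - s = s from by ring]
            exact Int.not_even_iff_odd.mpr hs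
          simp only [hfdef, ht2, hmod, hdiv, hsv]
          rw [if_neg hc]
          refine congrArg₂ Prod.mk ?_ rfl
          refine congrArg Sum.inr (Fin.ext ?_)
          show ((i:ℤ)).toNat = (i:ℕ)
          omega
    · -- injective
      intro x y hxy
      rw [hNM]
      have h2 := congrArg Prod.snd hxy
      have h1 := congrArg Prod.fst hxy
      simp only [hfdef] at h1 h2
      have hdo : (o:ℤ) ∣ (x/2 - y/2) := by
        apply hfix
        have e : (π ^ (x/2 - y/2)) v0 = (π ^ (-(y/2))) ((π ^ (x/2)) v0) := by
          rw [show (π ^ (-(y/2))) ((π ^ (x/2)) v0) = (π ^ (-(y/2)) * π ^ (x/2)) v0 from rfl,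
            ← zpow_add]
          congr 2; ring
        rw [e, h2, show (π ^ (-(y/2))) ((π ^ (y/2)) v0) = (π ^ (-(y/2)) * π ^ (y/2)) v0 from rfl,
          ← zpow_add]
        simp
      have hval : ((x/2 % M)/(o:ℤ)) = ((y/2 % M)/(o:ℤ)) ∧ (Even (x - x/2) ↔ Even (y - y/2)) := by
        have hbx := hilt (x/2)
        have hby := hilt (y/2)
        by_cases hcx : Even (x - x/2) <;> by_cases hcy : Even (y - y/2)
        · rw [if_pos hcx, if_pos hcy] at h1
          simp only [Sum.inl.injEq, Fin.mk.injEq] at h1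
          exact ⟨by omega, iff_of_true hcx hcy⟩
        · rw [if_pos hcx, if_neg hcy] at h1
          exact absurd h1 (by simp)
        · rw [if_neg hcx, if_pos hcy] at h1
          exact absurd h1 (by simp)
        · rw [if_neg hcx, if_neg hcy] at h1
          simp only [Sum.inr.injEq, Fin.mk.injEq] at h1
          exact ⟨by omega, iff_of_false hcx hcy⟩
      obtain ⟨hdiv, hpariff⟩ := hval
      have hxo : (x/2 % M) % (o:ℤ) = (y/2 % M) % (o:ℤ) := by
        rw [Int.emod_emod_of_dvd _ hoM, Int.emod_emod_of_dvd _ hoM]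
        exact (Int.modEq_iff_dvd.mpr hdo).symm
      have hmeq : x/2 % M = y/2 % M := by
        have e1 := Int.mul_ediv_add_emod (x/2 % M) (o:ℤ)
        have e2 := Int.mul_ediv_add_emod (y/2 % M) (o:ℤ)
        rw [hdiv, hxo] at e1
        linarith
      have hMd : M ∣ x/2 - y/2 := by
        have e1 := Int.mul_ediv_add_emod (x/2) M
        have e2 := Int.mul_ediv_add_emod (y/2) M
        refine ⟨x/2/M - y/2/M, ?_⟩
        rw [hmeq] at e1
        have e3 : M*(x/2/M - y/2/M) = M*(x/2/M) - M*(y/2/M) := by ring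
        rw [e3]
        linarith
      obtain ⟨q, hq⟩ := hMd
      have h2d : (2:ℤ) ∣ (x/2 - y/2) := by
        rw [hq]; exact Dvd.dvd.mul_right hMeven q
      have hbb : x % 2 = y % 2 := by
        rw [Int.even_iff, Int.even_iff] at hpariff
        omega
      refine ⟨q, ?_⟩
      have hsplit : x - y = 2*(x/2 - y/2) := by omega
      rw [hsplit, hq]; ring
    · -- periodic
      intro t
      rw [hNM]
      have hs' : (t + 2*M)/2 = t/2 + M := by omega
      have hmod2 : (t/2 + M) % M = t/2 % M := by
        simp [Int.add_mul_emod_self_left]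
      have hvv : (π ^ (t/2 + M)) v0 = (π ^ (t/2)) v0 := by
        apply hfix2
        rw [show t/2 + M - t/2 = M from by ring]
        exact hoM
      simp only [hfdef, hs', hmod2, hvv]
      have hcond2 : (Even (t + 2*M - (t/2 + M))) ↔ (Even (t - t/2)) := by
        rw [Int.even_iff, Int.even_iff]
        omega
      simp only [hcond2]
    · -- adjacency shift
      intro x y
      rw [hADJ x y, hADJ (x+1) (y+1),
        show y + 1 - (x + 1) = y - x from by ring]
      by_cases hxy : Even (y - x)
      · have hd : (y+1)/2 - (x+1)/2 = y/2 - x/2 := by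
          rw [Int.even_iff] at hxy; omega
        rw [hd]
      · simp [hxy]
  · -- G has no edge : V is a single vertex
    push_neg at hE
    have hsub : ∀ v : V, v = v0 := by
      intro v
      obtain ⟨p⟩ := hconn v v0
      cases p with
      | nil => rfl
      | cons h _ => exact absurd h (hE _ _)
    have h2n : (0:ℤ) < 2*(n:ℤ) := by omega
    set g : ℤ → (Fin n ⊕ Fin n) × V := fun t =>
      (if h : (t % (2*(n:ℤ))).toNat < n then Sum.inl ⟨(t % (2*(n:ℤ))).toNat, h⟩
       else Sum.inr ⟨(t % (2*(n:ℤ))).toNat - n, by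
         have hh1 : 0 ≤ t % (2*(n:ℤ)) := Int.emod_nonneg t (by omega)
         have hh2 : t % (2*(n:ℤ)) < 2*(n:ℤ) := Int.emod_lt_of_pos t h2n
         omega⟩, v0) with hgdef
    have hc2 : ((2*n:ℕ):ℤ) = 2*(n:ℤ) := by push_cast; ring
    apply aux_isCirculant_of_shift _ (2*n) (by omega) g
    · -- surjective
      rintro ⟨p, v⟩
      rcases p with i | i
      · refine ⟨(i:ℤ), ?_⟩
        have he : ((i:ℤ) % (2*(n:ℤ))) = (i:ℤ) := by
          apply Int.emod_eq_of_lt (by positivity)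
          have := i.isLt; omega
        rw [hgdef]
        simp only [he]
        rw [dif_pos (by have := i.isLt; omega)]
        rw [hsub v]
        refine congrArg₂ Prod.mk ?_ rfl
        refine congrArg Sum.inl (Fin.ext ?_)
        show ((i:ℤ)).toNat = (i:ℕ)
        omega
      · refine ⟨(n:ℤ) + (i:ℤ), ?_⟩
        have he : (((n:ℤ) + (i:ℤ)) % (2*(n:ℤ))) = (n:ℤ) + (i:ℤ) := by
          apply Int.emod_eq_of_lt (by positivity)
          have := i.isLt; omega
        rw [hgdef]
        simp only [he]
        rw [dif_neg (by have := i.isLt; omega)]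
        rw [hsub v]
        refine congrArg₂ Prod.mk ?_ rfl
        refine congrArg Sum.inr (Fin.ext ?_)
        show ((n:ℤ)+(i:ℤ)).toNat - n = (i:ℕ)
        have := i.isLt
        omega
    · -- injective
      intro x y hxy
      rw [hc2]
      have h1 := congrArg Prod.fst hxy
      rw [hgdef] at h1
      simp only at h1
      have hex : (x % (2*(n:ℤ))).toNat = (y % (2*(n:ℤ))).toNat := by
        by_cases hx : (x % (2*(n:ℤ))).toNat < n <;> by_cases hy : (y % (2*(n:ℤ))).toNat < n
        · rw [dif_pos hx, dif_pos hy] at h1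
          simpa using h1
        · rw [dif_pos hx, dif_neg hy] at h1
          exact absurd h1 (by simp)
        · rw [dif_neg hx, dif_pos hy] at h1
          exact absurd h1 (by simp)
        · rw [dif_neg hx, dif_neg hy] at h1
          have hh1 : 0 ≤ x % (2*(n:ℤ)) := Int.emod_nonneg x (by omega)
          have hh2 : x % (2*(n:ℤ)) < 2*(n:ℤ) := Int.emod_lt_of_pos x h2n
          have hh3 : 0 ≤ y % (2*(n:ℤ)) := Int.emod_nonneg y (by omega)
          have hh4 : y % (2*(n:ℤ)) < 2*(n:ℤ) := Int.emod_lt_of_pos y h2n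
          simp only [Sum.inr.injEq, Fin.mk.injEq] at h1
          omega
      have heq : x % (2*(n:ℤ)) = y % (2*(n:ℤ)) := by
        have hh1 : 0 ≤ x % (2*(n:ℤ)) := Int.emod_nonneg x (by omega)
        have hh3 : 0 ≤ y % (2*(n:ℤ)) := Int.emod_nonneg y (by omega)
        omega
      have hmod : Int.ModEq (2*(n:ℤ)) y x := heq.symm
      exact hmod.dvd
    · -- periodic
      intro t
      rw [hc2]
      have he : (t + 2*(n:ℤ)) % (2*(n:ℤ)) = t % (2*(n:ℤ)) := by
        simp [Int.add_mul_emod_self_left]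
      rw [hgdef]
      simp only [he]
    · -- adjacency
      intro x y
      constructor
      · intro h; exact absurd h.2 (hE _ _)
      · intro h; exact absurd h.2 (hE _ _)
end
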